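/- The tridiagonal matrix H of the previous statement satisfies the characteristic identity: its spectrum is the set {M·|B| : M ∈ ℤ, -J ≤ M ≤ J} where |B|² = z² + (x²+y²)/4; equivalently, the characteristic polynomial of H equals ∏_{M=-J}^{J}(λ - M|B|). -/

import Mathlib

open Complex Polynomial

/-- The `(2J+1)×(2J+1)` tridiagonal matrix of `B·L` in the spin-`J` representation,
indexed by `i, j : Fin (2J+1)` with `M = i - J ∈ {-J,…,J}`. -/
noncomputable def BdotL (J : ℕ) (x y z : ℝ) :
    Matrix (Fin (2 * J + 1)) (Fin (2 * J + 1)) ℂ := fun i j =>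
  let M : ℤ := (i : ℤ) - (J : ℤ)
  if (j : ℤ) = (i : ℤ) - 1 then
    -(((x : ℂ) - Complex.I * y) / 4) *
      Real.sqrt (((J : ℝ) - (M : ℝ) + 1) * ((J : ℝ) + (M : ℝ)))
  else if j = i then (z : ℂ) * (M : ℂ)
  else if (j : ℤ) = (i : ℤ) + 1 then
    -(((x : ℂ) + Complex.I * y) / 4) *
      Real.sqrt (((J : ℝ) + (M : ℝ) + 1) * ((J : ℝ) - (M : ℝ)))
  else 0

/-! ### Auxiliary machinery -/

lemma charpoly_similar {n : Type*} [DecidableEq n] [Fintype n] (P M T : Matrix n n ℂ)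
    (hP : P.det ≠ 0) (h : M * P = P * T) : M.charpoly = T.charpoly := by
  have key : Matrix.charmatrix M * (C : ℂ →+* ℂ[X]).mapMatrix P
      = (C : ℂ →+* ℂ[X]).mapMatrix P * Matrix.charmatrix T := by
    unfold Matrix.charmatrix
    rw [sub_mul, mul_sub]
    congr 1
    · exact Matrix.scalar_commute X (fun r => Commute.all _ _) _
    · rw [← _root_.map_mul, h, _root_.map_mul]
  have hdet : ((C : ℂ →+* ℂ[X]).mapMatrix P).det = C P.det := ((C : ℂ →+* ℂ[X]).map_det P).symm
  have h2 := congrArg Matrix.det key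
  rw [Matrix.det_mul, Matrix.det_mul, hdet] at h2
  have hC : (C P.det : ℂ[X]) ≠ 0 := by simpa using hP
  unfold Matrix.charpoly
  rw [mul_comm] at h2
  exact mul_left_cancel₀ hC h2

lemma castP1 (i j : ℕ) (hj : 1 ≤ j) :
    (j : ℂ) * (i.choose j) = ((i:ℂ) - j + 1) * (i.choose (j-1)) := by
  obtain ⟨k, rfl⟩ : ∃ k, j = k + 1 := ⟨j - 1, by omega⟩
  rcases le_or_gt k i with h | h
  · have hn := Nat.choose_succ_right_eq i k
    have hc : ((i - k : ℕ) : ℂ) = (i : ℂ) - k := by push_cast [Nat.cast_sub h]; ring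
    have := congrArg (fun m : ℕ => (m : ℂ)) hn
    push_cast at this
    rw [hc] at this
    simp only [Nat.add_sub_cancel]
    push_cast
    linear_combination this
  · rw [Nat.choose_eq_zero_of_lt (by omega), Nat.choose_eq_zero_of_lt (by omega)]
    simp

lemma castP2 (i j : ℕ) (hj : 1 ≤ j) :
    (((i+1).choose j : ℕ) : ℂ) = (i.choose j) + (i.choose (j-1)) := by
  obtain ⟨k, rfl⟩ : ∃ k, j = k + 1 := ⟨j - 1, by omega⟩
  rw [Nat.choose_succ_succ' i k]
  push_cast
  simp [add_comm]

lemma castP3 (i j : ℕ) (hj : 1 ≤ j) :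
    (i : ℂ) * ((i-1).choose j) = ((i:ℂ) - j) * (i.choose j) := by
  rcases Nat.eq_zero_or_pos i with rfl | hi
  · rw [Nat.choose_eq_zero_of_lt (by omega)]
    simp
  obtain ⟨m, rfl⟩ : ∃ m, i = m + 1 := ⟨i - 1, by omega⟩
  rcases le_or_gt j (m+1) with h | h
  · have hn := Nat.choose_mul_succ_eq m j
    have hc : ((m + 1 - j : ℕ) : ℂ) = ((m:ℂ) + 1) - j := by push_cast [Nat.cast_sub h]; ring
    have := congrArg (fun x : ℕ => (x : ℂ)) hn
    push_cast at this
    rw [hc] at this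
    simp only [Nat.add_sub_cancel]
    push_cast
    linear_combination this
  · rw [Nat.choose_eq_zero_of_lt (by omega), Nat.choose_eq_zero_of_lt (by omega)]
    simp

noncomputable def nuf (c : ℂ) (a b : ℕ) : ℂ := c ^ (a - b) * (a.choose b)

lemma keyid (J i j : ℕ) (z α c : ℂ) (hi : i ≤ 2*J) (hj : j ≤ 2*J) :
    (α*c^2 - z*c)*i*(nuf c (i-1) j) + z*((i:ℂ) - J)*(nuf c i j)
      + α*(((2*J:ℂ) - i))*(nuf c (i+1) j)
    = (z - 2*c*α)*((j:ℂ) - J)*(nuf c i j)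
      + (if j = 0 then 0 else α*((2*J:ℂ) - (j-1:ℕ))*(nuf c i (j-1))) := by
  rcases Nat.eq_zero_or_pos j with rfl | hj1
  · simp only [if_pos rfl, nuf, Nat.choose_zero_right, Nat.cast_one, mul_one, Nat.sub_zero,
      Nat.cast_zero, add_zero]
    rcases Nat.eq_zero_or_pos i with rfl | hi1
    · simp; ring
    · obtain ⟨m, rfl⟩ : ∃ m, i = m + 1 := ⟨i - 1, by omega⟩
      simp only [Nat.add_sub_cancel]
      push_cast
      ring
  · rcases lt_or_ge (i+1) j with hlt | hge
    · rw [if_neg (by omega)]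
      simp only [nuf, Nat.choose_eq_zero_of_lt (show i - 1 < j by omega),
        Nat.choose_eq_zero_of_lt (show i < j by omega),
        Nat.choose_eq_zero_of_lt (show i + 1 < j by omega),
        Nat.choose_eq_zero_of_lt (show i < j - 1 by omega)]
      simp
    rcases eq_or_lt_of_le hge with heq | hgt
    · subst heq
      rw [if_neg (by omega)]
      simp only [nuf, Nat.add_sub_cancel, Nat.choose_self,
        Nat.choose_eq_zero_of_lt (show i - 1 < i + 1 by omega),
        Nat.choose_eq_zero_of_lt (show i < i + 1 by omega)]
      simp
    rcases eq_or_lt_of_le (show j ≤ i by omega) with heq | hgt2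
    · subst heq
      rw [if_neg (by omega)]
      obtain ⟨m, rfl⟩ : ∃ m, j = m + 1 := ⟨j - 1, by omega⟩
      have e1 : nuf c (m + 1 - 1) (m+1) = 0 := by
        simp [nuf, Nat.choose_eq_zero_of_lt (show m + 1 - 1 < m + 1 by omega)]
      have e2 : nuf c (m+1) (m+1) = 1 := by simp [nuf]
      have e3 : nuf c (m+1+1) (m+1) = c * (m+2 : ℕ) := by
        simp only [nuf, show m+1+1-(m+1) = 1 by omega, Nat.choose_succ_self_right]
        push_cast; ring
      have e4 : nuf c (m+1) (m+1-1) = c * (m+1 : ℕ) := by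
        simp only [nuf, show m+1-1 = m by omega, show m+1-m = 1 by omega,
          Nat.choose_succ_self_right]
        push_cast; ring
      rw [e1, e2, e3, e4]
      push_cast
      ring
    · rw [if_neg (by omega)]
      obtain ⟨e, rfl⟩ : ∃ e, i = j + (e + 1) := ⟨i - j - 1, by omega⟩
      have h1 : j + (e+1) - 1 - j = e := by omega
      have h2 : j + (e+1) - j = e + 1 := by omega
      have h3 : j + (e+1) + 1 - j = e + 2 := by omega
      have h4 : j + (e+1) - (j - 1) = e + 2 := by omega
      simp only [nuf, h1, h2, h3, h4]
      have hP1 := castP1 (j + (e+1)) j hj1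
      have hP2 := castP2 (j + (e+1)) j hj1
      have hP3 := castP3 (j + (e+1)) j hj1
      push_cast [Nat.cast_sub (show 1 ≤ j from hj1)] at hP1 hP2 hP3 ⊢
      linear_combination (c^e*(α*c^2 - z*c))*hP3
        + (c^e*α*c^2*((2*(J:ℂ))-(j:ℂ)-(e:ℂ)-1))*hP2 + (c^e*α*c^2)*hP1

noncomputable def matA1 (J : ℕ) (β : ℂ) : Matrix (Fin (2*J+1)) (Fin (2*J+1)) ℂ :=
  Matrix.of fun i j => if (j:ℤ) = (i:ℤ) - 1 then β * (i:ℕ) else 0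
noncomputable def matA2 (J : ℕ) (z : ℂ) : Matrix (Fin (2*J+1)) (Fin (2*J+1)) ℂ :=
  Matrix.diagonal (fun i : Fin (2*J+1) => z * (((i:ℕ):ℂ) - (J:ℂ)))
noncomputable def matA3 (J : ℕ) (α : ℂ) : Matrix (Fin (2*J+1)) (Fin (2*J+1)) ℂ :=
  Matrix.of fun i j => if (j:ℤ) = (i:ℤ) + 1 then α * ((2*J - (i:ℕ) : ℕ) : ℂ) else 0
noncomputable def matN (J : ℕ) (c : ℂ) : Matrix (Fin (2*J+1)) (Fin (2*J+1)) ℂ :=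
  Matrix.of fun i j => nuf c (i:ℕ) (j:ℕ)

lemma matA1_mul (J : ℕ) (β c : ℂ) (i j : Fin (2*J+1)) :
    (matA1 J β * matN J c) i j = β * (i:ℕ) * nuf c ((i:ℕ)-1) (j:ℕ) := by
  rw [Matrix.mul_apply]
  rcases Nat.eq_zero_or_pos (i:ℕ) with h0 | h1
  · rw [Finset.sum_eq_zero, h0]
    · simp
    · intro k _
      rw [matA1, Matrix.of_apply, if_neg (by omega)]
      ring
  · have hm : (i:ℕ) - 1 < 2*J+1 := by omega
    rw [Finset.sum_eq_single (⟨(i:ℕ)-1, hm⟩ : Fin (2*J+1))]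
    · rw [matA1, Matrix.of_apply, if_pos (by simp; omega), matN, Matrix.of_apply]
    · intro k _ hk
      rw [matA1, Matrix.of_apply, if_neg, zero_mul]
      intro hc
      exact hk (Fin.ext (by simp; omega))
    · intro h
      exact absurd (Finset.mem_univ _) h

lemma matA2_mul (J : ℕ) (z c : ℂ) (i j : Fin (2*J+1)) :
    (matA2 J z * matN J c) i j = z * (((i:ℕ):ℂ) - (J:ℂ)) * nuf c (i:ℕ) (j:ℕ) := by
  rw [matA2, Matrix.diagonal_mul, matN, Matrix.of_apply]

lemma matA3_mul (J : ℕ) (α c : ℂ) (i j : Fin (2*J+1)) :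
    (matA3 J α * matN J c) i j = α * ((2*J - (i:ℕ) : ℕ) : ℂ) * nuf c ((i:ℕ)+1) (j:ℕ) := by
  rw [Matrix.mul_apply]
  rcases eq_or_lt_of_le (show (i:ℕ) ≤ 2*J by omega) with h0 | h1
  · rw [Finset.sum_eq_zero]
    · rw [show (2*J - (i:ℕ) : ℕ) = 0 by omega]
      simp
    · intro k _
      rw [matA3, Matrix.of_apply, if_neg (by omega)]
      ring
  · have hm : (i:ℕ) + 1 < 2*J+1 := by omega
    rw [Finset.sum_eq_single (⟨(i:ℕ)+1, hm⟩ : Fin (2*J+1))]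
    · rw [matA3, Matrix.of_apply, if_pos (by simp), matN, Matrix.of_apply]
    · intro k _ hk
      rw [matA3, Matrix.of_apply, if_neg, zero_mul]
      intro hc
      exact hk (Fin.ext (by simp; omega))
    · intro h
      exact absurd (Finset.mem_univ _) h

lemma mul_matA2 (J : ℕ) (μ c : ℂ) (i j : Fin (2*J+1)) :
    (matN J c * matA2 J μ) i j = μ * (((j:ℕ):ℂ) - (J:ℂ)) * nuf c (i:ℕ) (j:ℕ) := by
  rw [matA2, Matrix.mul_diagonal, matN, Matrix.of_apply]
  ring

lemma mul_matA3 (J : ℕ) (α c : ℂ) (i j : Fin (2*J+1)) :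
    (matN J c * matA3 J α) i j =
      if (j:ℕ) = 0 then 0
      else α * ((2*J:ℂ) - (((j:ℕ)-1 : ℕ):ℂ)) * nuf c (i:ℕ) ((j:ℕ)-1) := by
  rw [Matrix.mul_apply]
  rcases Nat.eq_zero_or_pos (j:ℕ) with h0 | h1
  · rw [Finset.sum_eq_zero, if_pos h0]
    intro k _
    rw [matA3, Matrix.of_apply, if_neg (by omega)]
    ring
  · rw [if_neg (by omega)]
    have hm : (j:ℕ) - 1 < 2*J+1 := by omega
    rw [Finset.sum_eq_single (⟨(j:ℕ)-1, hm⟩ : Fin (2*J+1))]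
    · rw [matA3, Matrix.of_apply, if_pos (by simp; omega), matN, Matrix.of_apply]
      have hcast : ((2*J - ((j:ℕ)-1) : ℕ) : ℂ) = (2*J:ℂ) - (((j:ℕ)-1 : ℕ):ℂ) := by
        have : (j:ℕ) - 1 ≤ 2*J := by omega
        push_cast [Nat.cast_sub this]
        ring
      rw [hcast]
      ring
    · intro k _ hk
      rw [matA3, Matrix.of_apply, if_neg, mul_zero]
      intro hc
      exact hk (Fin.ext (by simp; omega))
    · intro h
      exact absurd (Finset.mem_univ _) h

lemma AmulN (J : ℕ) (z α β c μ : ℂ) (hq : α*c^2 = z*c + β) (hμ : μ = z - 2*c*α) :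
    (matA1 J β + matA2 J z + matA3 J α) * matN J c
      = matN J c * (matA2 J μ + matA3 J α) := by
  ext i j
  rw [Matrix.add_mul, Matrix.add_mul, Matrix.mul_add, Matrix.add_apply, Matrix.add_apply,
    Matrix.add_apply, matA1_mul, matA2_mul, matA3_mul, mul_matA2, mul_matA3]
  have hcast : ((2*J - (i:ℕ) : ℕ) : ℂ) = (2*J:ℂ) - ((i:ℕ):ℂ) := by
    push_cast [Nat.cast_sub (show (i:ℕ) ≤ 2*J by omega)]
    ring
  rw [hcast]
  have hk := keyid J (i:ℕ) (j:ℕ) z α c (by omega) (by omega)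
  linear_combination hk - ((i:ℕ):ℂ) * (nuf c ((i:ℕ)-1) (j:ℕ)) * hq
    - (((j:ℕ):ℂ) - (J:ℂ)) * (nuf c (i:ℕ) (j:ℕ)) * hμ

lemma sqrt_sub (J i : ℕ) (h1 : 1 ≤ i) (h2 : i ≤ 2*J) :
    Real.sqrt (((2*J+1-i)*i : ℕ)) * Real.sqrt ((2*J).choose (i-1))
      = Real.sqrt ((2*J).choose i) * i := by
  have h := Nat.choose_succ_right_eq (2*J) (i-1)
  rw [show i - 1 + 1 = i by omega, show 2*J - (i-1) = 2*J+1-i by omega] at h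
  have hr : ((2*J).choose i : ℝ) * i = ((2*J).choose (i-1) : ℝ) * ((2*J+1-i : ℕ) : ℝ) := by
    exact_mod_cast congrArg (fun m : ℕ => (m:ℝ)) h
  rw [← Real.sqrt_mul (by positivity)]
  rw [show Real.sqrt ((2*J).choose i : ℝ) * (i:ℝ)
      = Real.sqrt (((2*J).choose i : ℝ) * ((i:ℝ))^2) by
    rw [Real.sqrt_mul (by positivity), Real.sqrt_sq (by positivity)]]
  congr 1
  push_cast
  push_cast at hr
  linear_combination (-(i:ℝ)) * hr

lemma sqrt_sup (J i : ℕ) (h2 : i ≤ 2*J) :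
    Real.sqrt (((i+1)*(2*J-i) : ℕ)) * Real.sqrt ((2*J).choose (i+1))
      = Real.sqrt ((2*J).choose i) * ((2*J-i : ℕ) : ℝ) := by
  have h := Nat.choose_succ_right_eq (2*J) i
  have hr : ((2*J).choose (i+1) : ℝ) * ((i:ℝ)+1) = ((2*J).choose i : ℝ) * ((2*J-i : ℕ) : ℝ) := by
    exact_mod_cast congrArg (fun m : ℕ => (m:ℝ)) h
  rw [← Real.sqrt_mul (by positivity)]
  rw [show Real.sqrt ((2*J).choose i : ℝ) * ((2*J-i:ℕ):ℝ)
      = Real.sqrt (((2*J).choose i : ℝ) * (((2*J-i:ℕ):ℝ))^2) by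
    rw [Real.sqrt_mul (by positivity), Real.sqrt_sq (by positivity)]]
  congr 1
  push_cast
  linear_combination ((2*J-i:ℕ):ℝ) * hr

lemma HmulD (J : ℕ) (x y z : ℝ) :
    BdotL J x y z *
      Matrix.diagonal (fun i : Fin (2*J+1) => ((Real.sqrt ((2*J).choose i) : ℝ) : ℂ))
    = Matrix.diagonal (fun i : Fin (2*J+1) => ((Real.sqrt ((2*J).choose i) : ℝ) : ℂ)) *
      (matA1 J (-(((x:ℂ)) - Complex.I*y)/4) + matA2 J (z:ℂ)
        + matA3 J (-(((x:ℂ)) + Complex.I*y)/4)) := by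
  ext i j
  rw [Matrix.mul_diagonal, Matrix.diagonal_mul, Matrix.add_apply, Matrix.add_apply]
  by_cases hc1 : (j:ℤ) = (i:ℤ) - 1
  · have hij : i ≠ j := by intro h; subst h; omega
    have hji : ¬ (j = i) := fun h => hij h.symm
    have hc3 : ¬((j:ℤ) = (i:ℤ) + 1) := by omega
    simp only [BdotL, matA1, matA2, matA3, Matrix.of_apply, Matrix.diagonal_apply,
      if_pos hc1, if_neg hji, if_neg hc3, if_neg hij, add_zero, zero_add]
    have hi1 : 1 ≤ (i:ℕ) := by omega
    have hjj : (j:ℕ) = (i:ℕ) - 1 := by omega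
    have harg : ((J:ℝ) - ((((i:ℤ) - (J:ℤ)) : ℤ):ℝ) + 1) * ((J:ℝ) + ((((i:ℤ) - (J:ℤ)):ℤ):ℝ))
        = ((2*J+1-(i:ℕ) : ℕ) : ℝ) * (((i:ℕ):ℕ) : ℝ) := by
      push_cast [Nat.cast_sub (by omega : (i:ℕ) ≤ 2*J+1)]
      ring
    rw [harg, hjj]
    have hsC := congrArg (fun r : ℝ => (r:ℂ)) (sqrt_sub J (i:ℕ) hi1 (by omega))
    push_cast at hsC
    linear_combination (-((x:ℂ) - Complex.I*y)/4) * hsC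
  · by_cases hc2 : j = i
    · subst hc2
      simp only [BdotL, matA1, matA2, matA3, Matrix.of_apply, Matrix.diagonal_apply,
        if_neg hc1, if_pos rfl, if_neg (show ¬((j:ℤ) = (j:ℤ) + 1) by omega), add_zero, zero_add]
      push_cast
      ring
    · by_cases hc3 : (j:ℤ) = (i:ℤ) + 1
      · have hij : i ≠ j := by intro h; subst h; omega
        simp only [BdotL, matA1, matA2, matA3, Matrix.of_apply, Matrix.diagonal_apply,
          if_pos hc3, if_neg hc2, if_neg hc1, if_neg hij, add_zero, zero_add]
        have hjj : (j:ℕ) = (i:ℕ) + 1 := by omega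
        have hi2 : (i:ℕ) ≤ 2*J := by omega
        have harg : ((J:ℝ) + ((((i:ℤ) - (J:ℤ)) : ℤ):ℝ) + 1) * ((J:ℝ) - ((((i:ℤ) - (J:ℤ)):ℤ):ℝ))
            = (((i:ℕ):ℝ)+1) * ((2*J-(i:ℕ) : ℕ) : ℝ) := by
          push_cast [Nat.cast_sub hi2]
          ring
        rw [harg, hjj]
        have hsC := congrArg (fun r : ℝ => (r:ℂ)) (sqrt_sup J (i:ℕ) hi2)
        push_cast at hsC
        linear_combination (-((x:ℂ) + Complex.I*y)/4) * hsC
      · have hij : ¬(i = j) := by intro h; subst h; exact hc2 rfl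
        simp only [BdotL, matA1, matA2, matA3, Matrix.of_apply, Matrix.diagonal_apply,
          if_neg hc1, if_neg hc2, if_neg hc3, if_neg hij, add_zero, zero_add]
        simp

lemma detN (J : ℕ) (c : ℂ) : (matN J c).det = 1 := by
  have ht : (matN J c).BlockTriangular OrderDual.toDual := by
    intro i j h
    have hij : (i:ℕ) < (j:ℕ) := h
    rw [matN, Matrix.of_apply, nuf, Nat.choose_eq_zero_of_lt hij]
    simp
  rw [Matrix.det_of_lowerTriangular _ ht]
  apply Finset.prod_eq_one
  intro i _
  rw [matN, Matrix.of_apply, nuf]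
  simp

lemma charpolyT (J : ℕ) (μ α : ℂ) :
    (matA2 J μ + matA3 J α).charpoly
      = ∏ i : Fin (2*J+1), (X - C (μ * (((i:ℕ):ℂ) - (J:ℂ)))) := by
  have ht : (matA2 J μ + matA3 J α).BlockTriangular id := by
    intro i j h
    have hij : (j:ℕ) < (i:ℕ) := h
    rw [Matrix.add_apply, matA2, matA3, Matrix.of_apply,
      Matrix.diagonal_apply_ne _ (by intro hh; subst hh; omega), if_neg (by omega)]
    simp
  rw [Matrix.charpoly_of_upperTriangular _ ht]
  apply Finset.prod_congr rfl
  intro i _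
  rw [Matrix.add_apply, matA2, matA3, Matrix.of_apply, Matrix.diagonal_apply_eq,
    if_neg (by omega)]
  simp

lemma prodIcc (J : ℕ) (w : ℂ) :
    ∏ i : Fin (2*J+1), (X - C (w * (((i:ℕ):ℂ) - (J:ℂ))))
      = ∏ M ∈ Finset.Icc (-(J:ℤ)) (J:ℤ), (X - C ((M:ℂ) * w)) := by
  rw [← Finset.prod_coe_sort (Finset.Icc (-(J:ℤ)) (J:ℤ))]
  apply Finset.prod_bij (fun (i : Fin (2*J+1)) (_ : i ∈ Finset.univ) =>
    (⟨(i:ℤ) - J, by simp [Finset.mem_Icc]; omega⟩ : (Finset.Icc (-(J:ℤ)) (J:ℤ) : Finset ℤ)))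
  · intro a ha; exact Finset.mem_univ _
  · intro a ha b hb hab
    have : (a:ℤ) - J = (b:ℤ) - J := congrArg Subtype.val hab
    exact Fin.ext (by omega)
  · intro b hb
    have hm := b.2
    rw [Finset.mem_Icc] at hm
    refine ⟨⟨((b:ℤ) + J).toNat, by omega⟩, Finset.mem_univ _, ?_⟩
    apply Subtype.ext
    simp
    omega
  · intro a ha
    congr 1
    push_cast
    ring

lemma prodFlip (J : ℕ) (w : ℂ) :
    ∏ M ∈ Finset.Icc (-(J:ℤ)) (J:ℤ), (X - C ((M:ℂ) * w))
      = ∏ M ∈ Finset.Icc (-(J:ℤ)) (J:ℤ), (X - C ((M:ℂ) * (-w))) := by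
  apply Finset.prod_nbij' (fun M => -M) (fun M => -M)
  · intro a ha
    rw [Finset.mem_Icc] at ha ⊢
    omega
  · intro a ha
    rw [Finset.mem_Icc] at ha ⊢
    omega
  · intro a _; ring
  · intro a _; ring
  · intro a _
    congr 1
    push_cast
    ring

/-- the characteristic polynomial of the tridiagonal matrix `BdotL J x y z`
equals `∏_{M=-J}^{J} (λ - M·|B|)` with `|B| = √(z²+(x²+y²)/4)`. -/
theorem stmt3 (J : ℕ) (hJ : 1 ≤ J) (x y z : ℝ) :
    (BdotL J x y z).charpoly =
      ∏ M ∈ Finset.Icc (-(J : ℤ)) (J : ℤ),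
        (X - C ((M : ℂ) * Real.sqrt (z ^ 2 + (x ^ 2 + y ^ 2) / 4))) := by
  by_cases hxy : x = 0 ∧ y = 0
  · obtain ⟨rfl, rfl⟩ := hxy
    have ht : (BdotL J 0 0 z).BlockTriangular id := by
      intro i j h
      have hij : (j:ℕ) < (i:ℕ) := h
      simp only [BdotL]
      split_ifs with h1 h2 h3
      · push_cast
        ring
      · exfalso; omega
      · exfalso; omega
      · rfl
    rw [Matrix.charpoly_of_upperTriangular _ ht]
    have hdiag : ∀ i : Fin (2*J+1), BdotL J 0 0 z i i = (z:ℂ) * (((i:ℕ):ℂ) - (J:ℂ)) := by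
      intro i
      simp only [BdotL]
      rw [if_pos trivial]
      push_cast
      split_ifs with h
      · exfalso; omega
      · ring
    rw [Finset.prod_congr rfl (fun i _ => by rw [hdiag i]), prodIcc]
    have habs : Real.sqrt (z^2 + ((0:ℝ)^2+(0:ℝ)^2)/4) = |z| := by
      rw [show z^2 + ((0:ℝ)^2+(0:ℝ)^2)/4 = z^2 by ring, Real.sqrt_sq_eq_abs]
    rw [habs]
    rcases abs_cases z with ⟨he, _⟩ | ⟨he, _⟩
    · rw [he]
    · rw [he, prodFlip J (z:ℂ)]
      apply Finset.prod_congr rfl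
      intro M _
      push_cast
      ring_nf
  · -- generic case
    set α : ℂ := -(((x:ℂ)) + Complex.I*y)/4 with hα_def
    set β : ℂ := -(((x:ℂ)) - Complex.I*y)/4 with hβ_def
    have hα : α ≠ 0 := by
      rw [hα_def]
      intro h0
      rw [_root_.div_eq_zero_iff, neg_eq_zero] at h0
      rcases h0 with h0 | h0
      · rw [Complex.ext_iff] at h0
        simp at h0
        exact hxy h0
      · norm_num at h0
    set b : ℝ := Real.sqrt (z^2 + (x^2+y^2)/4) with hb_def
    have hbsq : b^2 = z^2 + (x^2+y^2)/4 := Real.sq_sqrt (by positivity)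
    have hb2 : ((b:ℝ):ℂ)^2 = (z:ℂ)^2 + 4*α*β := by
      have hcast := congrArg (fun r : ℝ => (r:ℂ)) hbsq
      push_cast at hcast
      rw [hα_def, hβ_def]
      linear_combination hcast + ((y:ℂ)^2/4) * Complex.I_sq
    set c : ℂ := ((z:ℂ) - b)/(2*α) with hc_def
    have h2α : (2*α) ≠ 0 := mul_ne_zero two_ne_zero hα
    have hq : α*c^2 = (z:ℂ)*c + β := by
      have hc2 : c*(2*α) = (z:ℂ) - b := by rw [hc_def]; exact div_mul_cancel₀ _ h2α
      have h4 : (4*α)*(α*c^2) = (4*α)*((z:ℂ)*c + β) := by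
        linear_combination (c*(2*α) + (z:ℂ) - b - 2*z)*hc2 + hb2
      exact mul_left_cancel₀ (mul_ne_zero (by norm_num : (4:ℂ) ≠ 0) hα) h4
    have hμ : ((b:ℝ):ℂ) = (z:ℂ) - 2*c*α := by
      rw [hc_def]
      field_simp
      ring
    have hDdet : (Matrix.diagonal
        (fun i : Fin (2*J+1) => ((Real.sqrt ((2*J).choose i) : ℝ) : ℂ))).det ≠ 0 := by
      rw [Matrix.det_diagonal]
      apply Finset.prod_ne_zero_iff.mpr
      intro i _
      rw [Complex.ofReal_ne_zero]
      have : 0 < (2*J).choose (i:ℕ) := Nat.choose_pos (by omega)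
      positivity
    have e1 := charpoly_similar _ _ _ hDdet (HmulD J x y z)
    have e2 := charpoly_similar (matN J c) _ _
      (by rw [detN]; exact one_ne_zero) (AmulN J (z:ℂ) α β c ((b:ℝ):ℂ) hq hμ)
    rw [e1, e2, charpolyT, prodIcc]
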